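/- The set of constraints consisting of all 9 box constraints, rows 0,2,3,5,6,8 and columns 0,2,3,5,6,8 (i.e., omitting rows 1,4,7 and columns 1,4,7, the middle row and middle column of each chute) entails all 27 Sudoku constraints: any filling satisfying these 21 constraints satisfies all 27. -/
import Mathlib


def sudokuRow (i : Fin 9) : Set (Fin 9 × Fin 9) := {p | p.1 = i}
def sudokuCol (j : Fin 9) : Set (Fin 9 × Fin 9) := {p | p.2 = j}
def sudokuBox (a b : Fin 3) : Set (Fin 9 × Fin 9) :=
  {p | (p.1 : ℕ) / 3 = (a : ℕ) ∧ (p.2 : ℕ) / 3 = (b : ℕ)}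

lemma row_surj (f : Fin 9 × Fin 9 → Fin 9) (i : Fin 9)
    (h : Set.InjOn f (sudokuRow i)) (v : Fin 9) : ∃ j, f (i, j) = v := by
  have hg : Function.Injective (fun j : Fin 9 => f (i, j)) := by
    intro j k hjk
    have := h (show (i, j) ∈ sudokuRow i from rfl) (show (i, k) ∈ sudokuRow i from rfl) hjk
    exact congrArg Prod.snd this
  exact Finite.injective_iff_surjective.mp hg v

lemma col_surj (f : Fin 9 × Fin 9 → Fin 9) (j : Fin 9)
    (h : Set.InjOn f (sudokuCol j)) (v : Fin 9) : ∃ i, f (i, j) = v := by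
  have hg : Function.Injective (fun i : Fin 9 => f (i, j)) := by
    intro i k hik
    have := h (show (i, j) ∈ sudokuCol j from rfl) (show (k, j) ∈ sudokuCol j from rfl) hik
    exact congrArg Prod.fst this
  exact Finite.injective_iff_surjective.mp hg v

lemma mid_row (f : Fin 9 × Fin 9 → Fin 9) (a : Fin 3)
    (hb : ∀ b, Set.InjOn f (sudokuBox a b))
    (h0 : Set.InjOn f (sudokuRow ⟨3 * a, by omega⟩))
    (h2 : Set.InjOn f (sudokuRow ⟨3 * a + 2, by omega⟩)) :
    Set.InjOn f (sudokuRow ⟨3 * a + 1, by omega⟩) := by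
  rintro ⟨i1, j⟩ hp ⟨i2, k⟩ hq hv
  simp only [sudokuRow, Set.mem_setOf_eq] at hp hq
  subst hp hq
  by_cases hjk : j = k
  · rw [hjk]
  · exfalso
    obtain ⟨j0, hj0⟩ := row_surj f _ h0 (f (⟨3 * a + 1, by omega⟩, j))
    obtain ⟨j2, hj2⟩ := row_surj f _ h2 (f (⟨3 * a + 1, by omega⟩, j))
    -- distinctness of columns-boxes
    have hne_jk : (j : ℕ) / 3 ≠ (k : ℕ) / 3 := by
      intro he
      have := hb ⟨(j : ℕ) / 3, by omega⟩
        (show _ ∈ sudokuBox a _ from ⟨by simp; try omega, rfl⟩)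
        (show _ ∈ sudokuBox a _ from ⟨by simp; try omega, he.symm⟩) hv
      exact hjk (congrArg Prod.snd this)
    have key : ∀ (r : Fin 9) (c : Fin 9), (r : ℕ) / 3 = a → f (r, c) = f (⟨3 * a + 1, by omega⟩, j) →
        (c : ℕ) / 3 = (j : ℕ) / 3 → r = ⟨3 * a + 1, by omega⟩ ∧ c = j := by
      intro r c hr hfv hc
      have := hb ⟨(j : ℕ) / 3, by omega⟩
        (show _ ∈ sudokuBox a _ from ⟨hr, hc⟩)
        (show _ ∈ sudokuBox a _ from ⟨by simp; try omega, rfl⟩) hfv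
      exact ⟨congrArg Prod.fst this, congrArg Prod.snd this⟩
    have key2 : ∀ (r : Fin 9) (c : Fin 9), (r : ℕ) / 3 = a → f (r, c) = f (⟨3 * a + 1, by omega⟩, j) →
        (c : ℕ) / 3 = (k : ℕ) / 3 → r = ⟨3 * a + 1, by omega⟩ ∧ c = k := by
      intro r c hr hfv hc
      have := hb ⟨(k : ℕ) / 3, by omega⟩
        (show _ ∈ sudokuBox a _ from ⟨hr, hc⟩)
        (show _ ∈ sudokuBox a _ from ⟨by simp; try omega, rfl⟩) (hfv.trans hv)
      exact ⟨congrArg Prod.fst this, congrArg Prod.snd this⟩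
    -- j0's box differs from j's and k's
    have h0j : (j0 : ℕ) / 3 ≠ (j : ℕ) / 3 := by
      intro he
      have := (key _ _ (by simp; try omega) hj0 he).1
      have := congrArg Fin.val this; simp at this; try omega
    have h0k : (j0 : ℕ) / 3 ≠ (k : ℕ) / 3 := by
      intro he
      have := (key2 _ _ (by simp; try omega) hj0 he).1
      have := congrArg Fin.val this; simp at this; try omega
    have h2j : (j2 : ℕ) / 3 ≠ (j : ℕ) / 3 := by
      intro he
      have := (key _ _ (by simp; try omega) hj2 he).1
      have := congrArg Fin.val this; simp at this; try omega
    have h2k : (j2 : ℕ) / 3 ≠ (k : ℕ) / 3 := by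
      intro he
      have := (key2 _ _ (by simp; try omega) hj2 he).1
      have := congrArg Fin.val this; simp at this; try omega
    have h02 : (j0 : ℕ) / 3 ≠ (j2 : ℕ) / 3 := by
      intro he
      have := hb ⟨(j0 : ℕ) / 3, by omega⟩
        (show _ ∈ sudokuBox a _ from ⟨by simp; try omega, rfl⟩)
        (show _ ∈ sudokuBox a _ from ⟨by simp; try omega, he.symm⟩) (hj0.trans hj2.symm)
      have := congrArg (fun p : Fin 9 × Fin 9 => (p.1 : ℕ)) this; simp at this; try omega
    have := j.isLt; have := k.isLt; have := j0.isLt; have := j2.isLt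
    omega

lemma mid_col (f : Fin 9 × Fin 9 → Fin 9) (a : Fin 3)
    (hb : ∀ b, Set.InjOn f (sudokuBox b a))
    (h0 : Set.InjOn f (sudokuCol ⟨3 * a, by omega⟩))
    (h2 : Set.InjOn f (sudokuCol ⟨3 * a + 2, by omega⟩)) :
    Set.InjOn f (sudokuCol ⟨3 * a + 1, by omega⟩) := by
  have := mid_row (fun p => f (p.2, p.1)) a (fun b => by
    intro p hp q hq hfv
    obtain ⟨hp1, hp2⟩ := hp; obtain ⟨hq1, hq2⟩ := hq
    have := hb b (show (p.2, p.1) ∈ sudokuBox b a from ⟨hp2, hp1⟩)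
      (show (q.2, q.1) ∈ sudokuBox b a from ⟨hq2, hq1⟩) hfv
    exact Prod.ext (congrArg Prod.snd this) (congrArg Prod.fst this))
    (by intro p hp q hq hfv
        have := h0 (show (p.2, p.1) ∈ sudokuCol _ from hp) (show (q.2, q.1) ∈ sudokuCol _ from hq) hfv
        exact Prod.ext (congrArg Prod.snd this) (congrArg Prod.fst this))
    (by intro p hp q hq hfv
        have := h2 (show (p.2, p.1) ∈ sudokuCol _ from hp) (show (q.2, q.1) ∈ sudokuCol _ from hq) hfv
        exact Prod.ext (congrArg Prod.snd this) (congrArg Prod.fst this))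
  intro p hp q hq hfv
  have := this (show (p.2, p.1) ∈ sudokuRow _ from hp) (show (q.2, q.1) ∈ sudokuRow _ from hq) hfv
  exact Prod.ext (congrArg Prod.snd this) (congrArg Prod.fst this)

theorem omit_middle_rows_cols (f : Fin 9 × Fin 9 → Fin 9)
    (hboxes : ∀ a b : Fin 3, Set.InjOn f (sudokuBox a b))
    (hrows : ∀ i ∈ ({0, 2, 3, 5, 6, 8} : Set (Fin 9)), Set.InjOn f (sudokuRow i))
    (hcols : ∀ j ∈ ({0, 2, 3, 5, 6, 8} : Set (Fin 9)), Set.InjOn f (sudokuCol j)) :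
    (∀ i : Fin 9, Set.InjOn f (sudokuRow i)) ∧
    (∀ j : Fin 9, Set.InjOn f (sudokuCol j)) ∧
    (∀ a b : Fin 3, Set.InjOn f (sudokuBox a b)) := by
  refine ⟨?_, ?_, hboxes⟩
  · intro i
    fin_cases i
    · exact hrows 0 (by simp)
    · exact mid_row f 0 (hboxes 0) (hrows 0 (by simp)) (hrows 2 (by simp))
    · exact hrows 2 (by simp)
    · exact hrows 3 (by simp)
    · exact mid_row f 1 (hboxes 1) (hrows 3 (by simp)) (hrows 5 (by simp))
    · exact hrows 5 (by simp)
    · exact hrows 6 (by simp)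
    · exact mid_row f 2 (hboxes 2) (hrows 6 (by simp)) (hrows 8 (by simp))
    · exact hrows 8 (by simp)
  · intro j
    fin_cases j
    · exact hcols 0 (by simp)
    · exact mid_col f 0 (fun b => hboxes b 0) (hcols 0 (by simp)) (hcols 2 (by simp))
    · exact hcols 2 (by simp)
    · exact hcols 3 (by simp)
    · exact mid_col f 1 (fun b => hboxes b 1) (hcols 3 (by simp)) (hcols 5 (by simp))
    · exact hcols 5 (by simp)
    · exact hcols 6 (by simp)
    · exact mid_col f 2 (fun b => hboxes b 2) (hcols 6 (by simp)) (hcols 8 (by simp))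
    · exact hcols 8 (by simp)
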